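/- Let K ≥ 1 and let −π < l₁ ≤ u₁ < l₂ ≤ u₂ < … < l_K ≤ u_K < π, and set F = ⋃_{i=1}^{K}[l_i, u_i]. Let φ_g ∈ [−π, π] be a point at which χ attains its maximum over [−π, π]. Then the maximum of χ over F is attained as follows: (i) if φ_g ∈ F, then χ(y) ≤ χ(φ_g) for all y ∈ F; (ii) if φ_g ∉ [l₁, u_K], then χ(y) ≤ max(χ(l₁), χ(u_K)) for all y ∈ F; (iii) otherwise (φ_g ∈ [l₁, u_K] but φ_g ∉ F), letting r* be the largest index r with u_r < φ_g, one has χ(y) ≤ max(χ(l₁), χ(u_{r*}), χ(l_{r*+1}), χ(u_K)) for all y ∈ F. -/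

import Mathlib

open Set

open Real in
lemma char1 {c A z : ℝ} (hA : A ≤ π) (hcA : Real.cos A = c) (k : ℤ)
    (h : |z - 2*π*k| ≤ A) : c ≤ Real.cos z := by
  have h1 : Real.cos z = Real.cos |z - 2*π*k| := by
    rw [Real.cos_abs]
    rw [show z - 2*π*k = z - k*(2*π) by ring, Real.cos_sub_int_mul_two_pi]
  rw [h1, ← hcA]
  exact Real.cos_le_cos_of_nonneg_of_le_pi (abs_nonneg _) hA h

open Real in
lemma char2 {c A z : ℝ} (hA0 : 0 ≤ A) (hA : A ≤ π) (hcA : Real.cos A = c)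
    (h : c ≤ Real.cos z) : ∃ k : ℤ, |z - 2*π*k| ≤ A := by
  refine ⟨round (z / (2*π)), ?_⟩
  set k : ℤ := round (z / (2*π))
  have hb : |z - 2*π*k| ≤ π := by
    have h2 : |z / (2*π) - k| ≤ 1/2 := abs_sub_round _
    have hπ : (0:ℝ) < 2*π := by positivity
    calc |z - 2*π*k| = |z/(2*π) - k| * (2*π) := by
          rw [← abs_of_pos hπ, ← abs_mul]
          congr 1
          field_simp
          rw [abs_of_pos hπ]
      _ ≤ 1/2 * (2*π) := by nlinarith [abs_nonneg (z/(2*π) - (k:ℝ))]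
      _ = π := by ring
  by_contra hc
  push_neg at hc
  have h1 : Real.cos z = Real.cos |z - 2*π*k| := by
    rw [Real.cos_abs]
    rw [show z - 2*π*k = z - k*(2*π) by ring, Real.cos_sub_int_mul_two_pi]
  have := Real.cos_lt_cos_of_nonneg_of_le_pi hA0 hb hc
  rw [← h1, hcA] at this
  linarith

open Real in
lemma cosLemma {c p q r x : ℝ} (hpq : p < q) (hqr : q < r) (hrx : r ≤ x)
    (hxp : x ≤ p + 2*π) (hp : c ≤ Real.cos p) (hq : Real.cos q < c)
    (hr : c ≤ Real.cos r) : c ≤ Real.cos x := by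
  have hc1 : -1 < c := lt_of_le_of_lt (Real.neg_one_le_cos q) hq
  have hc2 : c ≤ 1 := le_trans hp (Real.cos_le_one p)
  set A := Real.arccos c with hAdef
  have hA0 : 0 ≤ A := Real.arccos_nonneg c
  have hAπ : A ≤ π := Real.arccos_le_pi c
  have hcA : Real.cos A = c := Real.cos_arccos hc1.le hc2
  have hAltπ : A < π := by
    rcases lt_or_eq_of_le hAπ with h | h
    · exact h
    · exfalso; rw [h, Real.cos_pi] at hcA; linarith
  obtain ⟨kp, hkp⟩ := char2 hA0 hAπ hcA hp
  obtain ⟨kr, hkr⟩ := char2 hA0 hAπ hcA hr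
  rw [abs_le] at hkp hkr
  have hπ : (0:ℝ) < π := Real.pi_pos
  have hk1 : kp < kr := by
    by_contra hcon
    push_neg at hcon
    have hq' : |q - 2*π*kp| ≤ A := by
      rw [abs_le]
      constructor
      · linarith
      · have : (kr:ℝ) ≤ kp := by exact_mod_cast hcon
        nlinarith
    exact absurd (char1 hAπ hcA kp hq') (not_le.mpr hq)
  have hk2 : kr ≤ kp + 1 := by
    by_contra hcon
    push_neg at hcon
    have hcon2 : kp + 2 ≤ kr := by omega
    have : (kp:ℝ) + 2 ≤ kr := by exact_mod_cast hcon2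
    nlinarith
  have hkeq : kr = kp + 1 := le_antisymm hk2 hk1
  apply char1 hAπ hcA kr
  rw [abs_le]
  constructor
  · linarith
  · have : (kr:ℝ) = kp + 1 := by exact_mod_cast hkeq
    nlinarith

open Real in
lemma trigLemma {α β γ p q r x : ℝ} (hpq : p < q) (hqr : q < r) (hrx : r ≤ x)
    (hxp : x ≤ p + 2*π)
    (hp : 0 ≤ α * Real.cos p + β * Real.sin p + γ)
    (hq : α * Real.cos q + β * Real.sin q + γ < 0)
    (hr : 0 ≤ α * Real.cos r + β * Real.sin r + γ) :
    0 ≤ α * Real.cos x + β * Real.sin x + γ := by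
  set w : ℂ := Complex.mk α β with hw
  have hwre : w.re = α := rfl
  have hwim : w.im = β := rfl
  have hwne : w ≠ 0 := by
    intro h
    have hα : α = 0 := by rw [← hwre, h]; rfl
    have hβ : β = 0 := by rw [← hwim, h]; rfl
    rw [hα, hβ] at hp hq
    simp at hp hq
    linarith
  set R := ‖w‖ with hR
  have hR0 : 0 < R := norm_pos_iff.mpr hwne
  set θ := Complex.arg w with hθ
  have hcθ : Real.cos θ = α / R := by rw [hθ, Complex.cos_arg hwne, hwre]
  have hsθ : Real.sin θ = β / R := by rw [hθ, Complex.sin_arg w, hwim]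
  have key : ∀ z : ℝ, α * Real.cos z + β * Real.sin z + γ = R * Real.cos (z - θ) + γ := by
    intro z
    rw [Real.cos_sub, hcθ, hsθ]
    field_simp
  rw [key] at hp hq hr ⊢
  have hc : ∀ z : ℝ, (0 ≤ R * Real.cos (z - θ) + γ ↔ -γ/R ≤ Real.cos (z - θ)) := by
    intro z
    rw [div_le_iff₀ hR0]
    constructor <;> intro h <;> nlinarith
  rw [hc] at hp hr ⊢
  have hq' : Real.cos (q - θ) < -γ/R := by
    by_contra hcon
    push_neg at hcon
    rw [← hc] at hcon
    linarith
  exact cosLemma (by linarith : p - θ < q - θ) (by linarith : q - θ < r - θ)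
    (by linarith : r - θ ≤ x - θ) (by linarith : x - θ ≤ (p - θ) + 2*π) hp hq' hr

lemma reExp (w : ℂ) (z : ℝ) :
    (w * Complex.exp (Complex.I * z)).re = w.re * Real.cos z + (-w.im) * Real.sin z := by
  rw [mul_comm Complex.I, Complex.exp_mul_I]
  simp [Complex.mul_re, Complex.add_re, Complex.add_im, Complex.mul_im,
    Complex.cos_ofReal_re, Complex.sin_ofReal_re, Complex.cos_ofReal_im,
    Complex.sin_ofReal_im]
  ring

lemma keyLemma (a c : ℂ) (b d : ℝ)
    (hpos : ∀ y : ℝ, 0 < (c * Complex.exp (Complex.I * (y : ℂ))).re + d)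
    (χ : ℝ → ℝ)
    (hχ : χ = fun y : ℝ => ((a * Complex.exp (Complex.I * (y : ℂ))).re + b) /
                        ((c * Complex.exp (Complex.I * (y : ℂ))).re + d))
    {t p q r x : ℝ} (hpq : p < q) (hqr : q < r) (hrx : r ≤ x) (hxp : x ≤ p + 2*Real.pi)
    (hp : t ≤ χ p) (hr : t ≤ χ r) : t ≤ χ q ∨ t ≤ χ x := by
  by_cases hcq : t ≤ χ q
  · exact Or.inl hcq
  right
  push_neg at hcq
  have hiff : ∀ z : ℝ, (t ≤ χ z ↔ 0 ≤ (a.re - t*c.re) * Real.cos z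
      + (-(a.im - t*c.im)) * Real.sin z + (b - t*d)) := by
    intro z
    have h1 : (a.re - t*c.re) * Real.cos z + (-(a.im - t*c.im)) * Real.sin z + (b - t*d)
        = ((a * Complex.exp (Complex.I * (z:ℂ))).re + b)
          - t * ((c * Complex.exp (Complex.I * (z:ℂ))).re + d) := by
      rw [reExp a z, reExp c z]; ring
    rw [h1, hχ]
    simp only
    rw [le_div_iff₀ (hpos z)]
    constructor <;> intro h <;> linarith
  rw [hiff] at hp hr ⊢
  have hq' : (a.re - t*c.re) * Real.cos q + (-(a.im - t*c.im)) * Real.sin q + (b - t*d) < 0 := by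
    by_contra hcon
    push_neg at hcon
    rw [← hiff] at hcon
    linarith
  exact trigLemma hpq hqr hrx hxp hp hq' hr

lemma chiPeriodic (a c : ℂ) (b d : ℝ) (χ : ℝ → ℝ)
    (hχ : χ = fun y : ℝ => ((a * Complex.exp (Complex.I * (y : ℂ))).re + b) /
                        ((c * Complex.exp (Complex.I * (y : ℂ))).re + d))
    (z : ℝ) : χ (z + 2*Real.pi) = χ z := by
  have he : ∀ w : ℂ, (w * Complex.exp (Complex.I * ((z + 2*Real.pi : ℝ) : ℂ))).re
      = (w * Complex.exp (Complex.I * (z : ℂ))).re := by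
    intro w
    rw [reExp, reExp, Real.cos_add_two_pi, Real.sin_add_two_pi]
  rw [hχ]
  simp only [he]
open Set


/-- Optimization of `χ(y) = (Re(a e^{iy})+b)/(Re(c e^{iy})+d)` over a finite union of
disjoint ordered closed intervals `F = ⋃ [lᵢ, uᵢ] ⊆ (−π, π)`: if the global maximizer
`φ_g` over `[−π,π]` is feasible it solves the problem; if it lies outside `[l₁, u_K]`
the solution is among the two extreme interval endpoints; otherwise it is among
`{l₁, u_{r*}, l_{r*+1}, u_K}` where `r*` is the largest index with `u_{r*} < φ_g`. -/
theorem stmt2 (a c : ℂ) (b d : ℝ)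
    (χ : ℝ → ℝ)
    (hχ : χ = fun y : ℝ => ((a * Complex.exp (Complex.I * (y : ℂ))).re + b) /
                        ((c * Complex.exp (Complex.I * (y : ℂ))).re + d))
    (hpos : ∀ y : ℝ, 0 < (c * Complex.exp (Complex.I * (y : ℂ))).re + d)
    (K : ℕ) (hK : 0 < K) (l u : Fin K → ℝ)
    (hlu : ∀ i, l i ≤ u i)
    (hord : ∀ i j : Fin K, i < j → u i < l j)
    (hleft : -Real.pi < l ⟨0, hK⟩) (hright : u ⟨K - 1, by omega⟩ < Real.pi)
    (F : Set ℝ) (hF : F = ⋃ i : Fin K, Icc (l i) (u i))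
    (φg : ℝ) (hφg : φg ∈ Icc (-Real.pi) Real.pi)
    (hmax : ∀ y ∈ Icc (-Real.pi) Real.pi, χ y ≤ χ φg) :
    (φg ∈ F → ∀ y ∈ F, χ y ≤ χ φg) ∧
    (φg ∉ Icc (l ⟨0, hK⟩) (u ⟨K - 1, by omega⟩) →
      ∀ y ∈ F, χ y ≤ max (χ (l ⟨0, hK⟩)) (χ (u ⟨K - 1, by omega⟩))) ∧
    (φg ∈ Icc (l ⟨0, hK⟩) (u ⟨K - 1, by omega⟩) → φg ∉ F →
      ∀ r : Fin K, u r < φg → (∀ r' : Fin K, u r' < φg → r' ≤ r) →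
        ∀ hr : r.val + 1 < K,
          ∀ y ∈ F, χ y ≤ max (max (χ (l ⟨0, hK⟩)) (χ (u r)))
                            (max (χ (l ⟨r.val + 1, hr⟩)) (χ (u ⟨K - 1, by omega⟩)))) := by
  obtain ⟨hφ1, hφ2⟩ := hφg
  set i0 : Fin K := ⟨0, hK⟩ with hi0
  set iK : Fin K := ⟨K - 1, by omega⟩ with hiK
  have hπ := Real.pi_pos
  have hl0 : ∀ i : Fin K, l i0 ≤ l i := by
    intro i
    rcases Nat.eq_zero_or_pos i.val with h | h
    · have : i = i0 := Fin.ext h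
      rw [this]
    · exact le_trans (hlu i0) (le_of_lt (hord i0 i (by rw [Fin.lt_def]; exact h)))
  have huK : ∀ i : Fin K, u i ≤ u iK := by
    intro i
    rcases eq_or_lt_of_le (Nat.le_sub_one_of_lt i.isLt) with h | h
    · have : i = iK := Fin.ext h
      rw [this]
    · exact le_trans (le_of_lt (hord i iK (by rw [Fin.lt_def]; exact h))) (hlu iK)
  have hmem : ∀ y ∈ F, ∃ i : Fin K, l i ≤ y ∧ y ≤ u i := by
    intro y hy
    rw [hF, mem_iUnion] at hy
    obtain ⟨i, hi⟩ := hy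
    exact ⟨i, hi.1, hi.2⟩
  have hbound : ∀ y ∈ F, l i0 ≤ y ∧ y ≤ u iK := by
    intro y hy
    obtain ⟨i, h1, h2⟩ := hmem y hy
    exact ⟨le_trans (hl0 i) h1, le_trans h2 (huK i)⟩
  have hIcc : ∀ y ∈ F, y ∈ Icc (-Real.pi) Real.pi := by
    intro y hy
    obtain ⟨h1, h2⟩ := hbound y hy
    exact ⟨by linarith, by linarith⟩
  refine ⟨fun _ y hy => hmax y (hIcc y hy), ?_, ?_⟩
  · -- part (ii)
    intro hout y hy
    obtain ⟨hL0y, hyUK⟩ := hbound y hy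
    have hout' : φg < l i0 ∨ u iK < φg := by
      by_contra hcon
      push_neg at hcon
      exact hout ⟨hcon.1, hcon.2⟩
    rcases hout' with hcase | hcase
    · -- φg < l i0
      rcases eq_or_lt_of_le hL0y with heq | hlt
      · rw [← heq]; exact le_max_left _ _
      · have := keyLemma a c b d hpos χ hχ hcase hlt hyUK
          (by linarith : u iK ≤ φg + 2*Real.pi) (hmax y (hIcc y hy)) (le_refl _)
        rcases this with h | h
        · exact le_trans h (le_max_left _ _)
        · exact le_trans h (le_max_right _ _)
    · -- u iK < φg
      rcases eq_or_lt_of_le hyUK with heq | hlt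
      · rw [heq]; exact le_max_right _ _
      · have := keyLemma a c b d hpos χ hχ hlt hcase
          (by linarith : φg ≤ l i0 + 2*Real.pi)
          (by linarith : l i0 + 2*Real.pi ≤ y + 2*Real.pi)
          (le_refl _) (hmax y (hIcc y hy))
        rcases this with h | h
        · exact le_trans h (le_max_right _ _)
        · rw [chiPeriodic a c b d χ hχ] at h
          exact le_trans h (le_max_left _ _)
  · -- part (iii)
    intro _ hnF r hur hmaxr hr1 y hy
    set r1 : Fin K := ⟨r.val + 1, hr1⟩ with hr1def
    have hφl : φg < l r1 := by
      have h1 : ¬ u r1 < φg := by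
        intro h
        have := hmaxr r1 h
        rw [Fin.le_def] at this
        simp only [hr1def, Fin.val_mk] at this; omega
      push_neg at h1
      by_contra hcon
      push_neg at hcon
      exact hnF (by rw [hF, mem_iUnion]; exact ⟨r1, hcon, h1⟩)
    obtain ⟨i, hyl, hyu⟩ := hmem y hy
    obtain ⟨hL0y, hyUK⟩ := hbound y hy
    rcases le_or_gt i r with hir | hri
    · -- y ≤ u r, u r < φg
      have hyur : y ≤ u r := by
        rcases eq_or_lt_of_le hir with heq | hlt
        · rw [← heq]; exact hyu
        · exact le_trans hyu (le_trans (le_of_lt (hord i r hlt)) (hlu r))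
      rcases eq_or_lt_of_le hyur with heq | hlt
      · rw [heq]; exact le_trans (le_max_right _ _) (le_max_left _ _)
      · have := keyLemma a c b d hpos χ hχ hlt hur
          (by linarith : φg ≤ l i0 + 2*Real.pi)
          (by linarith : l i0 + 2*Real.pi ≤ y + 2*Real.pi)
          (le_refl _) (hmax y (hIcc y hy))
        rcases this with h | h
        · exact le_trans h (le_trans (le_max_right _ _) (le_max_left _ _))
        · rw [chiPeriodic a c b d χ hχ] at h
          exact le_trans h (le_trans (le_max_left _ _) (le_max_left _ _))
    · -- l r1 ≤ y, φg < l r1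
      have hly : l r1 ≤ y := by
        rcases eq_or_lt_of_le (show r1 ≤ i by rw [Fin.le_def]; simp [hr1def]; omega)
          with heq | hlt
        · rw [heq]; exact hyl
        · exact le_trans (hlu r1) (le_trans (le_of_lt (hord r1 i hlt)) hyl)
      rcases eq_or_lt_of_le hly with heq | hlt
      · rw [← heq]; exact le_trans (le_max_left _ _) (le_max_right _ _)
      · have := keyLemma a c b d hpos χ hχ hφl hlt hyUK
          (by linarith : u iK ≤ φg + 2*Real.pi) (hmax y (hIcc y hy)) (le_refl _)
        rcases this with h | h
        · exact le_trans h (le_trans (le_max_left _ _) (le_max_right _ _))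
        · exact le_trans h (le_trans (le_max_right _ _) (le_max_right _ _))
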